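/- Let ε ≥ 0 and λ ∈ (0,1]. Then (1 - 1/(e^ε + 1)) / (1 + (1/(e^ε + 1))·((1-λ)/λ)) ≤ e^ε·λ / (1 + λ·e^ε) ≤ e^ε·λ. In particular, if a graph of density λ must attain expected Jaccard similarity at least a constant c > 0 under randomized response with parameter ε (up to vanishing error terms), then e^ε ≥ c/λ, i.e., ε ≥ log(c/λ). -/

import Mathlib

theorem stmt_7 (ε lam : ℝ) (hε : 0 ≤ ε) (hl0 : 0 < lam) (hl1 : lam ≤ 1) :
    (1 - 1 / (Real.exp ε + 1)) / (1 + (1 / (Real.exp ε + 1)) * ((1 - lam) / lam))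
        ≤ Real.exp ε * lam / (1 + lam * Real.exp ε)
    ∧ Real.exp ε * lam / (1 + lam * Real.exp ε) ≤ Real.exp ε * lam
    ∧ (∀ c : ℝ, 0 < c → c ≤ Real.exp ε * lam →
        c / lam ≤ Real.exp ε ∧ Real.log (c / lam) ≤ ε) := by
  have hE1 : (1:ℝ) ≤ Real.exp ε := Real.one_le_exp hε
  have hE0 : (0:ℝ) < Real.exp ε := Real.exp_pos ε
  have hE1' : Real.exp ε + 1 ≠ 0 := by positivity
  have hden : (0:ℝ) < 1 + lam * Real.exp ε := by positivity
  refine ⟨le_of_eq ?_, ?_, ?_⟩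
  · have hD : (1 + Real.exp ε + Real.exp ε * lam + Real.exp ε ^ 2 * lam) ≠ 0 := by positivity
    have hD2 : ((Real.exp ε + 1) * ((Real.exp ε + 1) * lam + (1 - lam))) ≠ 0 := by nlinarith
    have hD3 : 1 + Real.exp ε * lam ≠ 0 := by positivity
    field_simp
    rw [div_eq_iff (by nlinarith [mul_pos hE0 hl0])]
    ring
  · have h : Real.exp ε * lam / (1 + lam * Real.exp ε) ≤ Real.exp ε * lam / 1 := by
      apply div_le_div_of_nonneg_left (by positivity) one_pos
      nlinarith
    simpa using h
  · intro c hc hcle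
    have h1 : c / lam ≤ Real.exp ε := by
      rw [div_le_iff₀ hl0]; linarith [hcle]
    refine ⟨h1, ?_⟩
    calc Real.log (c / lam) ≤ Real.log (Real.exp ε) :=
          Real.log_le_log (by positivity) h1
      _ = ε := Real.log_exp ε
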